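/- Let G be a group given as a central extension 1 → Z → G → Q → 1 where Z is infinite cyclic and central in G. If Q contains an element of infinite order, then G contains a subgroup isomorphic to ℤ × ℤ. -/
import Mathlib


/-- central extension 1 → ℤ → G → Q → 1; if Q has an element of
infinite order then G contains a subgroup isomorphic to ℤ × ℤ. -/
theorem central_extension_Z_contains_Z2
    (G : Type*) [Group G] (Z : Subgroup G) [Z.Normal]
    (hcentral : Z ≤ Subgroup.center G)
    (hZ : Nonempty (Z ≃* Multiplicative ℤ))
    (q : G ⧸ Z) (hq : ¬ IsOfFinOrder q) :
    ∃ H : Subgroup G, Nonempty (H ≃* Multiplicative (ℤ × ℤ)) := by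
  obtain ⟨e⟩ := hZ
  set ζ : Z := e.symm (Multiplicative.ofAdd (1 : ℤ)) with hζ
  set z : G := (ζ : G) with hzdef
  obtain ⟨g, hg⟩ := QuotientGroup.mk'_surjective Z q
  have hc : ∀ a : G, Commute a z := fun a =>
    (Subgroup.mem_center_iff.mp (hcentral ζ.2) a)
  -- powers of ζ
  have hζpow : ∀ n : ℤ, ζ ^ n = e.symm (Multiplicative.ofAdd n) := by
    intro n
    rw [hζ, ← map_zpow]
    congr 1
    simp [← ofAdd_zsmul]
  have hzinj : ∀ n : ℤ, z ^ n = 1 → n = 0 := by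
    intro n hn
    have : (ζ ^ n : Z) = 1 := by
      apply Subtype.coe_injective
      simpa using hn
    rw [hζpow] at this
    have := e.symm.injective (this.trans (map_one e.symm).symm)
    simpa using this
  have hqinj : ∀ m : ℤ, q ^ m = 1 → m = 0 := by
    intro m hm
    by_contra h
    exact hq (isOfFinOrder_iff_zpow_eq_one.mpr ⟨m, h, hm⟩)
  -- the homomorphism
  let φ : Multiplicative (ℤ × ℤ) →* G :=
  { toFun := fun p => g ^ (p.toAdd.1) * z ^ (p.toAdd.2)
    map_one' := by simp
    map_mul' := by
      intro p r
      simp only [toAdd_mul, Prod.fst_add, Prod.snd_add, zpow_add]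
      have h1 : Commute (z ^ p.toAdd.2) (g ^ r.toAdd.1) :=
        ((hc g).symm.zpow_zpow _ _)
      rw [mul_assoc, mul_assoc, ← mul_assoc (z ^ p.toAdd.2), h1.eq, mul_assoc (g ^ r.toAdd.1)] }
  have hinj : Function.Injective φ := by
    rw [injective_iff_map_eq_one]
    intro p hp
    have hp' : g ^ (p.toAdd.1) * z ^ (p.toAdd.2) = 1 := hp
    have hm : q ^ (p.toAdd.1) = 1 := by
      have := congrArg (QuotientGroup.mk' Z) hp'
      simp only [map_mul, map_zpow, map_one] at this
      have hz1 : (QuotientGroup.mk' Z) z = 1 := by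
        rw [QuotientGroup.mk'_apply, QuotientGroup.eq_one_iff]
        exact ζ.2
      rw [hz1, one_zpow, mul_one, hg] at this
      exact this
    have h1 : p.toAdd.1 = 0 := hqinj _ hm
    have h2 : p.toAdd.2 = 0 := by
      apply hzinj
      rw [h1] at hp'
      simpa using hp'
    have : p.toAdd = 0 := Prod.ext h1 h2
    simpa using congrArg Multiplicative.ofAdd this
  exact ⟨φ.range, ⟨(MonoidHom.ofInjective hinj).symm⟩⟩
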